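/- arXiv:2605.14142 — 3 statements merged into one kernel-verified Lean document; each statement's English description precedes it below -/
import Mathlib

section
/- Let d ≥ 1, M ≥ 1, σ > 0, λ > 0, and let π be a finite Borel measure on ℝ^d with ∫‖x‖ dπ(x) < ∞. Then the function F_{M,λ} : (ℝ^d)^M → ℝ defined by F_{M,λ}(Y) = inf_{w ∈ ℝ^M} (1/2)(C_π − 2⟨w, v0(Y)⟩ + wᵀ K_λ(Y) w) is differentiable at every configuration Y = (y_1,…,y_M), and its gradient, viewed as the M×d matrix whose i-th row is the gradient with respect to y_i, equals σ^{-2} W*_λ(Y) ( K_λ(Y) W*_λ(Y) Y − v1(Y) ), where Y on the right-hand side denotes the M×d matrix with rows y_i and v1(Y) the M×d matrix with rows v1(y_i). -/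
set_option maxHeartbeats 1000000
set_option synthInstance.maxHeartbeats 200000


open MeasureTheory Matrix

noncomputable section

/-- Points in `ℝ^d` with the Euclidean norm. -/
abbrev Euc (d : ℕ) := EuclideanSpace ℝ (Fin d)

/-- The squared-exponential (Gaussian) kernel with bandwidth `σ`. -/
def ker {d : ℕ} (σ : ℝ) (x y : Euc d) : ℝ := Real.exp (-‖x - y‖ ^ 2 / (2 * σ ^ 2))

/-- Kernel mean embedding `v0(y) = ∫ κ(x,y) dπ(x)`. -/
def v0 {d : ℕ} (σ : ℝ) (π : Measure (Euc d)) (y : Euc d) : ℝ := ∫ x, ker σ x y ∂π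

/-- Kernel embedding of the first moment `v1(y) = ∫ x κ(x,y) dπ(x)`. -/
def v1 {d : ℕ} (σ : ℝ) (π : Measure (Euc d)) (y : Euc d) : Euc d := ∫ x, ker σ x y • x ∂π

/-- The constant `C_π = ∬ κ(x,x') dπ(x) dπ(x')`. -/
def Cpi {d : ℕ} (σ : ℝ) (π : Measure (Euc d)) : ℝ := ∫ x, ∫ x', ker σ x x' ∂π ∂π

/-- Regularized kernel matrix `K_λ(Y) = K(Y) + λ I`. -/
def Klam {d M : ℕ} (σ lam : ℝ) (Y : Fin M → Euc d) : Matrix (Fin M) (Fin M) ℝ :=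
  Matrix.of (fun i j => ker σ (Y i) (Y j)) + lam • (1 : Matrix (Fin M) (Fin M) ℝ)

/-- The vector `v0(Y) ∈ ℝ^M` with entries `v0(y_i)`. -/
def v0vec {d M : ℕ} (σ : ℝ) (π : Measure (Euc d)) (Y : Fin M → Euc d) : Fin M → ℝ :=
  fun i => v0 σ π (Y i)

/-- Regularized optimal weights `w*_λ(Y) = K_λ(Y)⁻¹ v0(Y)`. -/
def wstar {d M : ℕ} (σ lam : ℝ) (π : Measure (Euc d)) (Y : Fin M → Euc d) : Fin M → ℝ :=
  (Klam σ lam Y)⁻¹ *ᵥ v0vec σ π Y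

/-- `F_{M,λ}(Y) = inf_w (1/2)(C_π − 2⟨w, v0(Y)⟩ + wᵀ K_λ(Y) w)`. -/
def FM {d M : ℕ} (σ lam : ℝ) (π : Measure (Euc d)) (Y : Fin M → Euc d) : ℝ :=
  ⨅ w : Fin M → ℝ,
    (1 / 2) * (Cpi σ π - 2 * (w ⬝ᵥ v0vec σ π Y) + w ⬝ᵥ (Klam σ lam Y *ᵥ w))

/-- The configuration `Y` viewed as the `M×d` matrix with rows `y_i`. -/
def Ymat {d M : ℕ} (Y : Fin M → Euc d) : Matrix (Fin M) (Fin d) ℝ :=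
  Matrix.of fun i j => Y i j

/-- The `M×d` matrix with rows `v1(y_i)`. -/
def v1mat {d M : ℕ} (σ : ℝ) (π : Measure (Euc d)) (Y : Fin M → Euc d) :
    Matrix (Fin M) (Fin d) ℝ :=
  Matrix.of fun i j => v1 σ π (Y i) j

namespace ClaudeAux

variable {d M : ℕ} {σ lam : ℝ}

lemma ker_symm (σ : ℝ) (x y : Euc d) : ker σ x y = ker σ y x := by
  simp [ker, norm_sub_rev]

lemma ker_pos (σ : ℝ) (x y : Euc d) : 0 < ker σ x y := Real.exp_pos _

lemma ker_le_one (hσ : σ ≠ 0) (x y : Euc d) : ker σ x y ≤ 1 := by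
  rw [ker, Real.exp_le_one_iff, neg_div]
  have : (0:ℝ) ≤ ‖x - y‖ ^ 2 / (2 * σ ^ 2) := by positivity
  linarith

lemma ker_mul_norm_le (hσ : σ ≠ 0) (x y : Euc d) :
    ker σ x y * ‖x - y‖ ≤ 1 + 2 * σ ^ 2 := by
  set t := ‖x - y‖ with ht
  have ht0 : 0 ≤ t := norm_nonneg _
  have hσ2 : (0:ℝ) < σ ^ 2 := by positivity
  rcases le_total t 1 with h | h
  · have h1 : ker σ x y * t ≤ 1 * 1 :=
      mul_le_mul (ker_le_one hσ x y) h ht0 zero_le_one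
    nlinarith
  · have e : ker σ x y = (Real.exp (t ^ 2 / (2 * σ ^ 2)))⁻¹ := by
      rw [ker, ← Real.exp_neg]
      congr 1
      ring
    have hp : (0:ℝ) < t ^ 2 / (2 * σ ^ 2) := by positivity
    have hle : t ^ 2 / (2 * σ ^ 2) ≤ Real.exp (t ^ 2 / (2 * σ ^ 2)) := by
      have := Real.add_one_le_exp (t ^ 2 / (2 * σ ^ 2))
      linarith
    have hinv : (Real.exp (t ^ 2 / (2 * σ ^ 2)))⁻¹ ≤ (t ^ 2 / (2 * σ ^ 2))⁻¹ := by
      apply inv_anti₀ hp hle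
    have h2 : ker σ x y * t ≤ (t ^ 2 / (2 * σ ^ 2))⁻¹ * t := by
      rw [e]; exact mul_le_mul_of_nonneg_right hinv ht0
    have h3 : (t ^ 2 / (2 * σ ^ 2))⁻¹ * t = 2 * σ ^ 2 / t := by
      field_simp
    have h4 : 2 * σ ^ 2 / t ≤ 2 * σ ^ 2 := by
      rw [div_le_iff₀ (by linarith)]
      nlinarith
    nlinarith

lemma ker_quad_nonneg (hσ : σ ≠ 0) (Y : Fin M → Euc d) (w : Fin M → ℝ) :
    0 ≤ ∑ i, ∑ j, w i * ker σ (Y i) (Y j) * w j := by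
  have hσ2 : (0:ℝ) < σ ^ 2 := by positivity
  set c : ℝ := (σ ^ 2)⁻¹ with hc
  have hc0 : 0 ≤ c := by positivity
  set a : Fin M → ℝ := fun i => w i * Real.exp (-‖Y i‖ ^ 2 / (2 * σ ^ 2)) with ha
  set G : Fin M → Fin M → ℝ := fun i j => (inner ℝ (Y i) (Y j) : ℝ) with hG
  have hker : ∀ i j, w i * ker σ (Y i) (Y j) * w j = a i * a j * Real.exp (c * G i j) := by
    intro i j
    have hnorm : ‖Y i - Y j‖ ^ 2 = ‖Y i‖ ^ 2 - 2 * G i j + ‖Y j‖ ^ 2 :=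
      norm_sub_sq_real (Y i) (Y j)
    have hexp : Real.exp (-‖Y i - Y j‖ ^ 2 / (2 * σ ^ 2)) =
        Real.exp (-‖Y i‖ ^ 2 / (2 * σ ^ 2)) * Real.exp (-‖Y j‖ ^ 2 / (2 * σ ^ 2)) *
          Real.exp (c * G i j) := by
      rw [← Real.exp_add, ← Real.exp_add]
      congr 1
      rw [hnorm, hc]
      field_simp
      ring
    simp only [ker, ha, hexp]
    ring
  simp only [hker]
  -- expand exp as a tsum
  have hsummable : ∀ i j, Summable (fun k : ℕ => a i * a j * ((c * G i j) ^ k / (k.factorial : ℝ))) :=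
    fun i j => (Real.summable_pow_div_factorial _).mul_left _
  have hexp_tsum : ∀ i j, a i * a j * Real.exp (c * G i j) =
      ∑' k : ℕ, a i * a j * ((c * G i j) ^ k / (k.factorial : ℝ)) := by
    intro i j
    rw [Real.exp_eq_exp_ℝ, NormedSpace.exp_eq_tsum_div, tsum_mul_left]
  simp only [hexp_tsum]
  have step1 : ∀ i, (∑ j, ∑' k : ℕ, a i * a j * ((c * G i j) ^ k / (k.factorial : ℝ)))
      = ∑' k : ℕ, ∑ j, a i * a j * ((c * G i j) ^ k / (k.factorial : ℝ)) :=
    fun i => (Summable.tsum_finsetSum (fun j _ => hsummable i j)).symm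
  simp only [step1]
  rw [← Summable.tsum_finsetSum (fun i _ => summable_sum (fun j _ => hsummable i j))]
  apply tsum_nonneg
  intro k
  have hrw : ∀ i j, a i * a j * ((c * G i j) ^ k / (k.factorial : ℝ))
      = (c ^ k / (k.factorial : ℝ)) * (a i * a j * G i j ^ k) := by
    intro i j
    rw [mul_pow]
    ring
  simp only [hrw, ← Finset.mul_sum]
  apply mul_nonneg (by positivity)
  -- key: Gram-type quadratic form of the k-th Hadamard power is nonnegative
  have hGsum : ∀ i j, G i j = ∑ t, Y i t * Y j t := by
    intro i j
    simp [hG, PiLp.inner_apply, RCLike.inner_apply, conj_trivial]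
    exact Finset.sum_congr rfl fun _ _ => mul_comm _ _
  set S := Fintype.piFinset (fun _ : Fin k => (Finset.univ : Finset (Fin d))) with hS
  set P : Fin M → (Fin k → Fin d) → ℝ := fun i g => a i * ∏ s, Y i (g s) with hP
  have hpow : ∀ i j, a i * a j * G i j ^ k = ∑ g ∈ S, P i g * P j g := by
    intro i j
    have h1 : G i j ^ k = ∏ _s : Fin k, G i j := by
      rw [Finset.prod_const, Finset.card_univ, Fintype.card_fin]
    have h2 : (∏ _s : Fin k, G i j) = ∑ g ∈ S, ∏ s, (Y i (g s) * Y j (g s)) := by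
      simp only [hGsum]
      exact Finset.prod_univ_sum _ _
    rw [h1, h2, Finset.mul_sum]
    refine Finset.sum_congr rfl fun g _ => ?_
    rw [Finset.prod_mul_distrib, hP]
    ring
  simp only [hpow]
  have hswap : (∑ i, ∑ j, ∑ g ∈ S, P i g * P j g)
      = ∑ g ∈ S, ∑ i, ∑ j, P i g * P j g := by
    have h1 : ∀ i : Fin M, (∑ j, ∑ g ∈ S, P i g * P j g) = ∑ g ∈ S, ∑ j, P i g * P j g :=
      fun i => Finset.sum_comm
    simp only [h1]
    exact Finset.sum_comm
  rw [hswap]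
  apply Finset.sum_nonneg
  intro g _
  have : (∑ i, ∑ j, P i g * P j g) = (∑ i, P i g) * (∑ j, P j g) :=
    (Finset.sum_mul_sum _ _ _ _).symm
  rw [this]
  exact mul_self_nonneg _


section Mat

variable {d M : ℕ} {σ lam : ℝ}

lemma Klam_apply (Y : Fin M → Euc d) (i j : Fin M) :
    Klam σ lam Y i j = ker σ (Y i) (Y j) + lam * (if i = j then 1 else 0) := by
  simp [Klam, Matrix.one_apply]

lemma Klam_symm (Y : Fin M → Euc d) (i j : Fin M) :
    Klam σ lam Y i j = Klam σ lam Y j i := by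
  simp [Klam_apply, ker_symm, eq_comm]

lemma Klam_quad (Y : Fin M → Euc d) (u : Fin M → ℝ) :
    u ⬝ᵥ (Klam σ lam Y *ᵥ u) =
      (∑ i, ∑ j, u i * ker σ (Y i) (Y j) * u j) + lam * ∑ i, u i * u i := by
  simp only [dotProduct, Matrix.mulVec, dotProduct, Klam_apply, mul_add, add_mul,
    Finset.sum_add_distrib, Finset.mul_sum]
  congr 1
  · refine Finset.sum_congr rfl fun i _ => Finset.sum_congr rfl fun j _ => by ring
  · refine Finset.sum_congr rfl fun i _ => ?_
    rw [Finset.sum_eq_single i (fun j _ hj => by simp [Ne.symm hj]) (by simp)]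
    simp only [eq_self_iff_true, if_true, mul_one]
    ring

lemma Klam_quad_nonneg (hσ : σ ≠ 0) (hlam : 0 ≤ lam) (Y : Fin M → Euc d) (u : Fin M → ℝ) :
    0 ≤ u ⬝ᵥ (Klam σ lam Y *ᵥ u) := by
  rw [Klam_quad]
  have h1 := ker_quad_nonneg hσ Y u
  have h2 : 0 ≤ ∑ i, u i * u i := Finset.sum_nonneg fun i _ => mul_self_nonneg _
  nlinarith

lemma Klam_posDef (hσ : σ ≠ 0) (hlam : 0 < lam) (Y : Fin M → Euc d) :
    (Klam σ lam Y).PosDef := by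
  rw [Matrix.posDef_iff_dotProduct_mulVec]
  constructor
  · ext i j
    simp only [Matrix.conjTranspose_apply, star_trivial]
    exact Klam_symm Y j i
  · intro x hx
    have hstar : (star x : Fin M → ℝ) = x := by
      funext i; simp
    rw [hstar, Klam_quad]
    have h1 := ker_quad_nonneg hσ Y x
    have h2 : 0 < ∑ i, x i * x i := by
      obtain ⟨i, hi⟩ := Function.ne_iff.mp hx
      refine Finset.sum_pos' (fun j _ => mul_self_nonneg _) ⟨i, Finset.mem_univ i, ?_⟩
      exact mul_self_pos.mpr hi
    nlinarith

lemma Klam_det_ne (hσ : σ ≠ 0) (hlam : 0 < lam) (Y : Fin M → Euc d) :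
    (Klam σ lam Y).det ≠ 0 :=
  (Klam_posDef hσ hlam Y).det_pos.ne'

lemma Klam_mulVec_wstar (hσ : σ ≠ 0) (hlam : 0 < lam)
    (π : MeasureTheory.Measure (Euc d)) (Y : Fin M → Euc d) :
    Klam σ lam Y *ᵥ wstar σ lam π Y = v0vec σ π Y := by
  have hu : IsUnit (Klam σ lam Y).det := isUnit_iff_ne_zero.mpr (Klam_det_ne hσ hlam Y)
  rw [wstar, Matrix.mulVec_mulVec, Matrix.mul_nonsing_inv _ hu, Matrix.one_mulVec]

lemma dot_mulVec_symm (Y : Fin M → Euc d) (u v : Fin M → ℝ) :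
    u ⬝ᵥ (Klam σ lam Y *ᵥ v) = v ⬝ᵥ (Klam σ lam Y *ᵥ u) := by
  simp only [dotProduct, Matrix.mulVec, dotProduct, Finset.mul_sum]
  rw [Finset.sum_comm]
  refine Finset.sum_congr rfl fun j _ => Finset.sum_congr rfl fun i _ => ?_
  rw [Klam_symm Y i j]
  ring

lemma FM_eq (hσ : σ ≠ 0) (hlam : 0 < lam)
    (π : MeasureTheory.Measure (Euc d)) (Y : Fin M → Euc d) :
    FM σ lam π Y = (1 / 2) * (Cpi σ π - 2 * (wstar σ lam π Y ⬝ᵥ v0vec σ π Y) +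
      wstar σ lam π Y ⬝ᵥ (Klam σ lam Y *ᵥ wstar σ lam π Y)) := by
  set A := Klam σ lam Y
  set b := v0vec σ π Y
  set ws := wstar σ lam π Y
  have hAw : A *ᵥ ws = b := Klam_mulVec_wstar hσ hlam π Y
  have key : ∀ w : Fin M → ℝ,
      (Cpi σ π - 2 * (ws ⬝ᵥ b) + ws ⬝ᵥ (A *ᵥ ws)) ≤
        (Cpi σ π - 2 * (w ⬝ᵥ b) + w ⬝ᵥ (A *ᵥ w)) := by
    intro w
    have hq : 0 ≤ (w - ws) ⬝ᵥ (A *ᵥ (w - ws)) := Klam_quad_nonneg hσ hlam.le Y _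
    have hexp : (w - ws) ⬝ᵥ (A *ᵥ (w - ws)) =
        w ⬝ᵥ (A *ᵥ w) - 2 * (w ⬝ᵥ b) + ws ⬝ᵥ b := by
      have h1 : ws ⬝ᵥ (A *ᵥ w) = w ⬝ᵥ (A *ᵥ ws) := dot_mulVec_symm Y ws w
      have h2 : ws ⬝ᵥ (A *ᵥ ws) = ws ⬝ᵥ b := by rw [hAw]
      rw [Matrix.mulVec_sub]
      rw [sub_dotProduct, dotProduct_sub, dotProduct_sub]
      rw [h1, hAw]
      ring
    have h2 : ws ⬝ᵥ (A *ᵥ ws) = ws ⬝ᵥ b := by rw [hAw]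
    linarith [hq, hexp, h2]
  have hvalcmp : ∀ w : Fin M → ℝ,
      (1/2 : ℝ) * (Cpi σ π - 2 * (ws ⬝ᵥ b) + ws ⬝ᵥ (A *ᵥ ws)) ≤
        (1/2 : ℝ) * (Cpi σ π - 2 * (w ⬝ᵥ b) + w ⬝ᵥ (A *ᵥ w)) := by
    intro w; linarith [key w]
  apply le_antisymm
  · exact ciInf_le ⟨_, Set.forall_mem_range.mpr hvalcmp⟩ ws
  · exact le_ciInf hvalcmp

end Mat


section Calc

variable {d M : ℕ} {σ lam : ℝ}

/-- Derivative of the Gaussian kernel as a function of the pair. -/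
def Dpair (σ : ℝ) (x y : Euc d) : (Euc d × Euc d) →L[ℝ] ℝ :=
  (-(σ ^ 2)⁻¹ * ker σ x y) • ((innerSL ℝ (x - y)).comp
    (ContinuousLinearMap.fst ℝ (Euc d) (Euc d) - ContinuousLinearMap.snd ℝ (Euc d) (Euc d)))

lemma hasFDerivAt_ker_pair (hσ : σ ≠ 0) (x y : Euc d) :
    HasFDerivAt (fun p : Euc d × Euc d => ker σ p.1 p.2) (Dpair σ x y) (x, y) := by
  have hσ2 : (0:ℝ) < σ ^ 2 := by positivity
  have h1 : HasFDerivAt (fun p : Euc d × Euc d => p.1 - p.2)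
      (ContinuousLinearMap.fst ℝ (Euc d) (Euc d) - ContinuousLinearMap.snd ℝ (Euc d) (Euc d))
      (x, y) := (hasFDerivAt_fst.sub hasFDerivAt_snd)
  have h2 := h1.norm_sq
  have h3 := h2.const_mul (-(2 * σ ^ 2)⁻¹)
  have h4 := h3.exp
  have heq : (fun p : Euc d × Euc d => Real.exp (-(2 * σ ^ 2)⁻¹ * ‖p.1 - p.2‖ ^ 2)) =
      fun p : Euc d × Euc d => ker σ p.1 p.2 := by
    funext p; rw [ker]; congr 1; ring
  rw [heq] at h4
  refine h4.congr_fderiv ?_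
  have hker : Real.exp (-(2 * σ ^ 2)⁻¹ * ‖x - y‖ ^ 2) = ker σ x y := by
    rw [ker]; congr 1; ring
  refine ContinuousLinearMap.ext fun p => ?_
  simp only [Dpair, ContinuousLinearMap.smul_apply, ContinuousLinearMap.comp_apply,
    ContinuousLinearMap.coe_sub', Pi.sub_apply, ContinuousLinearMap.coe_fst',
    ContinuousLinearMap.coe_snd', smul_eq_mul, nsmul_eq_mul, Nat.cast_ofNat]
  rw [← hker]
  ring

/-- Derivative of the Gaussian kernel in the second variable. -/
def Dk (σ : ℝ) (x y : Euc d) : Euc d →L[ℝ] ℝ :=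
  ((σ ^ 2)⁻¹ * ker σ x y) • innerSL ℝ (x - y)

lemma hasFDerivAt_ker_right (hσ : σ ≠ 0) (x y : Euc d) :
    HasFDerivAt (fun z => ker σ x z) (Dk σ x y) y := by
  have h1 : HasFDerivAt (fun z : Euc d => ((x, z) : Euc d × Euc d))
      ((0 : Euc d →L[ℝ] Euc d).prod (ContinuousLinearMap.id ℝ (Euc d))) y :=
    (hasFDerivAt_const x y).prodMk (hasFDerivAt_id y)
  have h2 := (hasFDerivAt_ker_pair hσ x y).comp y h1
  refine h2.congr_fderiv ?_
  refine ContinuousLinearMap.ext fun v => ?_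
  simp only [Dk, Dpair, ContinuousLinearMap.smul_apply, ContinuousLinearMap.comp_apply,
    ContinuousLinearMap.coe_sub', Pi.sub_apply, ContinuousLinearMap.coe_fst',
    ContinuousLinearMap.coe_snd', smul_eq_mul, ContinuousLinearMap.prod_apply,
    ContinuousLinearMap.zero_apply, ContinuousLinearMap.coe_id', id_eq, innerSL_apply_apply]
  rw [inner_sub_right, inner_zero_right]
  ring

lemma norm_Dk_le (hσ : σ ≠ 0) (x y : Euc d) :
    ‖Dk σ x y‖ ≤ (σ ^ 2)⁻¹ * (1 + 2 * σ ^ 2) := by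
  have hσ2 : (0:ℝ) < σ ^ 2 := by positivity
  rw [Dk]
  refine le_trans (ContinuousLinearMap.opNorm_smul_le _ _) ?_
  rw [innerSL_apply_norm]
  rw [Real.norm_eq_abs, abs_of_pos (mul_pos (by positivity) (ker_pos σ x y))]
  have h1 : (σ ^ 2)⁻¹ * ker σ x y * ‖x - y‖ = (σ ^ 2)⁻¹ * (ker σ x y * ‖x - y‖) := by ring
  rw [h1]
  exact mul_le_mul_of_nonneg_left (ker_mul_norm_le hσ x y) (by positivity)

lemma continuous_ker_left (y : Euc d) : Continuous fun x : Euc d => ker σ x y := by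
  unfold ker
  exact Real.continuous_exp.comp
    ((((continuous_id.sub continuous_const).norm.pow 2).neg).div_const _)

lemma continuous_Dk (y : Euc d) : Continuous fun x : Euc d => Dk σ x y := by
  unfold Dk
  exact (continuous_const.mul (continuous_ker_left y)).smul
    ((innerSL ℝ).continuous.comp (continuous_id.sub continuous_const))

variable (π : MeasureTheory.Measure (Euc d)) [IsFiniteMeasure π]

lemma integrable_ker (hσ : σ ≠ 0) (y : Euc d) : Integrable (fun x => ker σ x y) π :=
  (integrable_const (1:ℝ)).mono' (continuous_ker_left y).aestronglyMeasurable
    (Filter.Eventually.of_forall fun x => by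
      rw [Real.norm_eq_abs, abs_of_pos (ker_pos σ x y)]; exact ker_le_one hσ x y)

lemma integrable_ker_smul (hσ : σ ≠ 0) (hπ : Integrable (fun x => ‖x‖) π) (y : Euc d) :
    Integrable (fun x => ker σ x y • x) π :=
  hπ.mono' (((continuous_ker_left y).smul continuous_id).aestronglyMeasurable)
    (Filter.Eventually.of_forall fun x => by
      rw [norm_smul, Real.norm_eq_abs, abs_of_pos (ker_pos σ x y)]
      exact mul_le_of_le_one_left (norm_nonneg x) (ker_le_one hσ x y))

lemma integrable_Dk (hσ : σ ≠ 0) (y : Euc d) : Integrable (fun x => Dk σ x y) π :=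
  (integrable_const ((σ ^ 2)⁻¹ * (1 + 2 * σ ^ 2))).mono'
    (continuous_Dk y).aestronglyMeasurable
    (Filter.Eventually.of_forall fun x => norm_Dk_le hσ x y)

lemma hasFDerivAt_v0 (hσ : σ ≠ 0) (hπ : Integrable (fun x => ‖x‖) π) (y : Euc d) :
    HasFDerivAt (v0 σ π) ((σ ^ 2)⁻¹ • innerSL ℝ (v1 σ π y - v0 σ π y • y)) y := by
  have key : HasFDerivAt (fun z : Euc d => ∫ x, ker σ x z ∂π) (∫ x, Dk σ x y ∂π) y := by
    apply hasFDerivAt_integral_of_dominated_of_fderiv_le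
      (F' := fun (z : Euc d) (x : Euc d) => Dk σ x z)
      (bound := fun _ => (σ ^ 2)⁻¹ * (1 + 2 * σ ^ 2)) (s := Metric.ball y 1) (Metric.ball_mem_nhds y one_pos)
    · exact Filter.Eventually.of_forall fun z => (continuous_ker_left z).aestronglyMeasurable
    · exact integrable_ker π hσ y
    · exact (continuous_Dk y).aestronglyMeasurable
    · exact Filter.Eventually.of_forall fun x z _ => norm_Dk_le hσ x z
    · exact integrable_const _
    · exact Filter.Eventually.of_forall fun x z _ => hasFDerivAt_ker_right hσ x z
  have heq : (∫ x, Dk σ x y ∂π) = (σ ^ 2)⁻¹ • innerSL ℝ (v1 σ π y - v0 σ π y • y) := by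
    apply ContinuousLinearMap.ext; intro v
    rw [ContinuousLinearMap.integral_apply (integrable_Dk π hσ y)]
    have hApp : ∀ x : Euc d, Dk σ x y v =
        (σ ^ 2)⁻¹ * ((inner ℝ v (ker σ x y • x) : ℝ) - ker σ x y * (inner ℝ y v : ℝ)) := by
      intro x
      simp only [Dk, ContinuousLinearMap.smul_apply, innerSL_apply_apply, smul_eq_mul,
        inner_sub_left, real_inner_smul_left, real_inner_smul_right]
      rw [real_inner_comm v x]
      ring
    simp only [hApp]
    rw [MeasureTheory.integral_const_mul]
    rw [MeasureTheory.integral_sub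
      ((integrable_ker_smul π hσ hπ y).const_inner v)
      ((integrable_ker π hσ y).mul_const _)]
    rw [integral_inner (integrable_ker_smul π hσ hπ y) v]
    rw [MeasureTheory.integral_mul_const]
    simp only [ContinuousLinearMap.smul_apply, innerSL_apply_apply, smul_eq_mul,
      inner_sub_left, real_inner_smul_left]
    rw [real_inner_comm v (v1 σ π y)]
    rw [v1, v0]
  rw [← heq]
  exact key

end Calc


section Det

variable {E : Type*} [NormedAddCommGroup E] [NormedSpace ℝ E] {n m : ℕ}

lemma differentiableAt_finset_prod {ι : Type*} [DecidableEq ι] {u : Finset ι}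
    {g : ι → E → ℝ} {x : E} (h : ∀ i ∈ u, DifferentiableAt ℝ (g i) x) :
    DifferentiableAt ℝ (fun e => ∏ i ∈ u, g i e) x := by
  have := HasFDerivAt.finset_prod (u := u) (g := g)
    (g' := fun i => fderiv ℝ (g i) x) (x := x) (fun i hi => (h i hi).hasFDerivAt)
  exact this.differentiableAt

lemma differentiableAt_det {f : E → Matrix (Fin n) (Fin n) ℝ} {x : E}
    (h : ∀ i j, DifferentiableAt ℝ (fun e => f e i j) x) :
    DifferentiableAt ℝ (fun e => (f e).det) x := by
  have heq : (fun e => (f e).det) =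
      fun e => ∑ σ : Equiv.Perm (Fin n),
        ((Equiv.Perm.sign σ : ℤ) : ℝ) * ∏ i, f e (σ i) i := by
    funext e
    rw [Matrix.det_apply']
  rw [heq]
  apply DifferentiableAt.fun_sum
  intro σ _
  apply DifferentiableAt.const_mul
  exact differentiableAt_finset_prod fun i _ => h (σ i) i

lemma differentiableAt_inv_entry {f : E → Matrix (Fin n) (Fin n) ℝ} {x : E}
    (h : ∀ i j, DifferentiableAt ℝ (fun e => f e i j) x)
    (hdet : (f x).det ≠ 0) (i j : Fin n) :
    DifferentiableAt ℝ (fun e => (f e)⁻¹ i j) x := by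
  have heq : (fun e => (f e)⁻¹ i j) =
      fun e => ((f e).det)⁻¹ * (f e).adjugate i j := by
    funext e
    rw [Matrix.inv_def, Matrix.smul_apply, Ring.inverse_eq_inv', smul_eq_mul]
  rw [heq]
  apply DifferentiableAt.mul
  · exact (differentiableAt_det h).inv hdet
  · -- adjugate entry is a determinant of an updated matrix
    have hadj : (fun e => (f e).adjugate i j) =
        fun e => ((f e).updateRow j (Pi.single i 1)).det := by
      funext e
      rw [Matrix.adjugate_apply]
    rw [hadj]
    apply differentiableAt_det
    intro k l
    rcases eq_or_ne k j with hk | hk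
    · subst hk
      simp only [Matrix.updateRow_self]
      exact differentiableAt_const _
    · simp only [Matrix.updateRow_ne hk]
      exact h k l

end Det



section Assemble

variable {d M : ℕ} {σ lam : ℝ}

def βD (σ : ℝ) (π : MeasureTheory.Measure (Euc d)) (Y : Fin M → Euc d) (i : Fin M) :
    (Fin M → Euc d) →L[ℝ] ℝ :=
  (((σ ^ 2)⁻¹ • innerSL ℝ (v1 σ π (Y i) - v0 σ π (Y i) • (Y i))).comp
    (ContinuousLinearMap.proj i))

def αD (σ : ℝ) (Y : Fin M → Euc d) (i j : Fin M) : (Fin M → Euc d) →L[ℝ] ℝ :=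
  (-(σ ^ 2)⁻¹ * ker σ (Y i) (Y j)) • ((innerSL ℝ (Y i - Y j)).comp
    ((ContinuousLinearMap.proj (R := ℝ) (φ := fun _ : Fin M => Euc d) i)
      - (ContinuousLinearMap.proj (R := ℝ) (φ := fun _ : Fin M => Euc d) j)))

def ωD (σ lam : ℝ) (π : MeasureTheory.Measure (Euc d)) (Y : Fin M → Euc d) (i : Fin M) :
    (Fin M → Euc d) →L[ℝ] ℝ :=
  fderiv ℝ (fun Z : Fin M → Euc d => wstar σ lam π Z i) Y

variable (π : MeasureTheory.Measure (Euc d)) [IsFiniteMeasure π]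

lemma hasFDerivAt_b (hσ : σ ≠ 0) (hπ : Integrable (fun x => ‖x‖) π)
    (Y : Fin M → Euc d) (i : Fin M) :
    HasFDerivAt (fun Z : Fin M → Euc d => v0 σ π (Z i)) (βD σ π Y i) Y :=
  by have := (hasFDerivAt_v0 π hσ hπ (Y i)).comp Y (hasFDerivAt_apply (𝕜 := ℝ) i Y); exact this

lemma hasFDerivAt_ker_entry (hσ : σ ≠ 0) (Y : Fin M → Euc d) (i j : Fin M) :
    HasFDerivAt (fun Z : Fin M → Euc d => ker σ (Z i) (Z j)) (αD σ Y i j) Y := by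
  have hσ2 : (0:ℝ) < σ ^ 2 := by positivity
  have h1 : HasFDerivAt (fun Z : Fin M → Euc d => Z i - Z j)
      (ContinuousLinearMap.proj i - ContinuousLinearMap.proj j) Y :=
    (hasFDerivAt_apply (𝕜 := ℝ) i Y).sub (hasFDerivAt_apply (𝕜 := ℝ) j Y)
  have h2 := h1.norm_sq
  have h3 := h2.const_mul (-(2 * σ ^ 2)⁻¹)
  have h4 := h3.exp
  have heq : (fun Z : Fin M → Euc d => Real.exp (-(2 * σ ^ 2)⁻¹ * ‖Z i - Z j‖ ^ 2)) =
      fun Z : Fin M → Euc d => ker σ (Z i) (Z j) := by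
    funext Z; rw [ker]; congr 1; ring
  rw [heq] at h4
  refine h4.congr_fderiv ?_
  have hker : Real.exp (-(2 * σ ^ 2)⁻¹ * ‖Y i - Y j‖ ^ 2) = ker σ (Y i) (Y j) := by
    rw [ker]; congr 1; ring
  refine ContinuousLinearMap.ext fun p => ?_
  simp only [αD, ContinuousLinearMap.smul_apply, ContinuousLinearMap.comp_apply,
    ContinuousLinearMap.coe_sub', Pi.sub_apply, ContinuousLinearMap.proj_apply,
    smul_eq_mul, nsmul_eq_mul, Nat.cast_ofNat]
  rw [← hker]
  ring

lemma hasFDerivAt_A (hσ : σ ≠ 0) (Y : Fin M → Euc d) (i j : Fin M) :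
    HasFDerivAt (fun Z : Fin M → Euc d => Klam σ lam Z i j) (αD σ Y i j) Y := by
  have h1 := hasFDerivAt_ker_entry hσ Y i j
  have heq : (fun Z : Fin M → Euc d => Klam σ lam Z i j) =
      fun Z : Fin M → Euc d => ker σ (Z i) (Z j) + lam * (if i = j then 1 else 0) := by
    funext Z; exact Klam_apply Z i j
  rw [heq]
  exact h1.add_const _

lemma diffAt_w (hσ : σ ≠ 0) (hlam : 0 < lam) (hπ : Integrable (fun x => ‖x‖) π)
    (Y : Fin M → Euc d) (i : Fin M) :
    DifferentiableAt ℝ (fun Z : Fin M → Euc d => wstar σ lam π Z i) Y := by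
  have hdet : (Klam σ lam Y).det ≠ 0 := Klam_det_ne hσ hlam Y
  have heq : (fun Z : Fin M → Euc d => wstar σ lam π Z i) =
      fun Z : Fin M → Euc d => ∑ j, (Klam σ lam Z)⁻¹ i j * v0 σ π (Z j) := by
    funext Z
    simp [wstar, Matrix.mulVec, dotProduct, v0vec]
  rw [heq]
  apply DifferentiableAt.fun_sum
  intro j _
  exact (differentiableAt_inv_entry
      (fun i j => (hasFDerivAt_A hσ Y i j).differentiableAt) hdet i j).mul
    (hasFDerivAt_b π hσ hπ Y j).differentiableAt

lemma hasFDerivAt_w (hσ : σ ≠ 0) (hlam : 0 < lam) (hπ : Integrable (fun x => ‖x‖) π)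
    (Y : Fin M → Euc d) (i : Fin M) :
    HasFDerivAt (fun Z : Fin M → Euc d => wstar σ lam π Z i) (ωD σ lam π Y i) Y :=
  (diffAt_w π hσ hlam hπ Y i).hasFDerivAt

end Assemble

end ClaudeAux

open ClaudeAux

theorem fm_differentiable_gradient
    (d M : ℕ) (hd : 1 ≤ d) (hM : 1 ≤ M) (σ lam : ℝ) (hσ : 0 < σ) (hlam : 0 < lam)
    (π : Measure (Euc d)) [IsFiniteMeasure π] (hπ : Integrable (fun x => ‖x‖) π)
    (Y : Fin M → Euc d) :
    DifferentiableAt ℝ (fun Z : Fin M → Euc d => FM σ lam π Z) Y ∧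
    ∀ V : Fin M → Euc d,
      fderiv ℝ (fun Z : Fin M → Euc d => FM σ lam π Z) Y V =
        ∑ i, ∑ j,
          ((σ ^ 2)⁻¹ •
            (Matrix.diagonal (wstar σ lam π Y) *
              (Klam σ lam Y * Matrix.diagonal (wstar σ lam π Y) * Ymat Y -
                v1mat σ π Y))) i j * (V i) j := by
  have hσ' : σ ≠ 0 := hσ.ne'
  -- rewrite FM globally using the closed form of the infimum
  have hFMeq : (fun Z : Fin M → Euc d => FM σ lam π Z) =
      fun Z : Fin M → Euc d =>
        (1 / 2 : ℝ) * (Cpi σ π - 2 * (∑ i, wstar σ lam π Z i * v0 σ π (Z i))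
          + ∑ i, ∑ j, wstar σ lam π Z i * (Klam σ lam Z i j * wstar σ lam π Z j)) := by
    funext Z
    rw [FM_eq hσ' hlam π Z]
    have h0 : ∀ (A : Matrix (Fin M) (Fin M) ℝ) (v : Fin M → ℝ) (i : Fin M),
        (A *ᵥ v) i = ∑ j, A i j * v j := fun A v i => rfl
    have e1 : wstar σ lam π Z ⬝ᵥ v0vec σ π Z
        = ∑ i, wstar σ lam π Z i * v0 σ π (Z i) := by
      simp [dotProduct, v0vec]
    have e2 : wstar σ lam π Z ⬝ᵥ (Klam σ lam Z *ᵥ wstar σ lam π Z)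
        = ∑ i, ∑ j, wstar σ lam π Z i * (Klam σ lam Z i j * wstar σ lam π Z j) := by
      simp [dotProduct, h0, Finset.mul_sum]
    rw [e1, e2]
  -- assemble the derivative
  have hBig : HasFDerivAt
      (fun Z : Fin M → Euc d =>
        (1 / 2 : ℝ) * (Cpi σ π - 2 * (∑ i, wstar σ lam π Z i * v0 σ π (Z i))
          + ∑ i, ∑ j, wstar σ lam π Z i * (Klam σ lam Z i j * wstar σ lam π Z j)))
      ((1 / 2 : ℝ) • ((0 - (2:ℝ) • (∑ i, (wstar σ lam π Y i • βD σ π Y i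
            + v0 σ π (Y i) • ωD σ lam π Y i)))
        + ∑ i, ∑ j, (wstar σ lam π Y i •
            (Klam σ lam Y i j • ωD σ lam π Y j + wstar σ lam π Y j • αD σ Y i j)
          + (Klam σ lam Y i j * wstar σ lam π Y j) • ωD σ lam π Y i))) Y := by
    apply HasFDerivAt.const_mul
    apply HasFDerivAt.add
    · apply HasFDerivAt.sub
      · exact hasFDerivAt_const _ _
      · exact (HasFDerivAt.fun_sum (fun i _ =>
          (hasFDerivAt_w π hσ' hlam hπ Y i).mul (hasFDerivAt_b π hσ' hπ Y i))).const_mul 2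
    · exact HasFDerivAt.fun_sum fun i _ =>
        HasFDerivAt.fun_sum fun j _ => (hasFDerivAt_w π hσ' hlam hπ Y i).mul
          ((hasFDerivAt_A hσ' Y i j).mul (hasFDerivAt_w π hσ' hlam hπ Y j))
  rw [← hFMeq] at hBig
  refine ⟨hBig.differentiableAt, ?_⟩
  intro V
  rw [hBig.fderiv]
  set wv : Fin M → ℝ := wstar σ lam π Y with hwv
  set bv : Fin M → ℝ := fun i => v0 σ π (Y i) with hbv
  have happly : ((1 / 2 : ℝ) • ((0 - (2:ℝ) • (∑ i, (wv i • βD σ π Y i + bv i • ωD σ lam π Y i)))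
        + ∑ i, ∑ j, (wv i • (Klam σ lam Y i j • ωD σ lam π Y j + wv j • αD σ Y i j)
          + (Klam σ lam Y i j * wv j) • ωD σ lam π Y i))) V
      = (1 / 2 : ℝ) * ((0 - 2 * (∑ i, (wv i * βD σ π Y i V + bv i * ωD σ lam π Y i V)))
        + ∑ i, ∑ j, (wv i * (Klam σ lam Y i j * ωD σ lam π Y j V + wv j * αD σ Y i j V)
          + (Klam σ lam Y i j * wv j) * ωD σ lam π Y i V)) := by
    simp [ContinuousLinearMap.sum_apply, mul_add, Finset.mul_sum]
  rw [happly]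
  -- key relation : Klam *ᵥ wstar = v0vec, entrywise
  have hrel : ∀ i, (∑ j, Klam σ lam Y i j * wv j) = bv i := by
    intro i
    have h := congrFun (Klam_mulVec_wstar hσ' hlam π Y) i
    simpa [Matrix.mulVec, dotProduct, v0vec, hwv, hbv] using h
  -- eliminate the ω terms
  have hω1 : (∑ i, ∑ j, wv i * (Klam σ lam Y i j * ωD σ lam π Y j V))
      = ∑ i, bv i * ωD σ lam π Y i V := by
    rw [Finset.sum_comm]
    refine Finset.sum_congr rfl fun j _ => ?_
    have h : (∑ i, wv i * (Klam σ lam Y i j * ωD σ lam π Y j V))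
        = (∑ i, Klam σ lam Y j i * wv i) * ωD σ lam π Y j V := by
      rw [Finset.sum_mul]
      refine Finset.sum_congr rfl fun i _ => ?_
      rw [Klam_symm Y i j]
      ring
    rw [h, hrel j]
  have hω2 : (∑ i, ∑ j, (Klam σ lam Y i j * wv j) * ωD σ lam π Y i V)
      = ∑ i, bv i * ωD σ lam π Y i V := by
    refine Finset.sum_congr rfl fun i _ => ?_
    rw [← Finset.sum_mul, hrel i]
  -- explicit values of α, β at V
  have hαv : ∀ i j, αD σ Y i j V =
      (-(σ ^ 2)⁻¹ * ker σ (Y i) (Y j)) * ∑ t, (Y i t - Y j t) * (V i t - V j t) := by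
    intro i j
    simp only [αD, ContinuousLinearMap.comp_apply, ContinuousLinearMap.smul_apply,
      ContinuousLinearMap.coe_sub', Pi.sub_apply, ContinuousLinearMap.proj_apply,
      smul_eq_mul, innerSL_apply_apply]
    congr 1 <;>
    simp [PiLp.inner_apply, RCLike.inner_apply, conj_trivial, PiLp.sub_apply]
    exact Finset.sum_congr rfl fun _ _ => mul_comm _ _
  have hβv : ∀ i, βD σ π Y i V =
      (σ ^ 2)⁻¹ * ∑ t, (v1 σ π (Y i) t - v0 σ π (Y i) * Y i t) * V i t := by
    intro i
    simp only [βD, ContinuousLinearMap.comp_apply, ContinuousLinearMap.smul_apply,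
      ContinuousLinearMap.proj_apply, smul_eq_mul, innerSL_apply_apply]
    congr 1 <;>
    simp [PiLp.inner_apply, RCLike.inner_apply, conj_trivial, PiLp.sub_apply, PiLp.smul_apply,
      smul_eq_mul]
    exact Finset.sum_congr rfl fun _ _ => mul_comm _ _
  -- symmetrize the α double sum
  have hαsum : (∑ i, ∑ j, wv i * (wv j * αD σ Y i j V))
      = ∑ i, ∑ j, 2 * ((wv i * wv j * (-(σ ^ 2)⁻¹ * ker σ (Y i) (Y j))) *
          ∑ t, (Y i t - Y j t) * V i t) := by
    have hsplit : ∀ i j, wv i * (wv j * αD σ Y i j V)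
        = (wv i * wv j * (-(σ ^ 2)⁻¹ * ker σ (Y i) (Y j))) * (∑ t, (Y i t - Y j t) * V i t)
          + (wv i * wv j * (-(σ ^ 2)⁻¹ * ker σ (Y i) (Y j))) *
              (∑ t, (Y j t - Y i t) * V j t) := by
      intro i j
      rw [hαv i j]
      have h : (∑ t, (Y i t - Y j t) * (V i t - V j t))
          = (∑ t, (Y i t - Y j t) * V i t) + (∑ t, (Y j t - Y i t) * V j t) := by
        rw [← Finset.sum_add_distrib]
        exact Finset.sum_congr rfl fun t _ => by ring
      rw [h]
      ring
    simp only [hsplit, Finset.sum_add_distrib]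
    have hswap : (∑ i, ∑ j, (wv i * wv j * (-(σ ^ 2)⁻¹ * ker σ (Y i) (Y j))) *
          (∑ t, (Y j t - Y i t) * V j t))
        = ∑ i, ∑ j, (wv i * wv j * (-(σ ^ 2)⁻¹ * ker σ (Y i) (Y j))) *
          (∑ t, (Y i t - Y j t) * V i t) := by
      rw [Finset.sum_comm]
      refine Finset.sum_congr rfl fun j _ => Finset.sum_congr rfl fun i _ => ?_
      rw [ker_symm σ (Y j) (Y i)]
      ring
    rw [hswap, ← Finset.sum_add_distrib]
    refine Finset.sum_congr rfl fun i _ => ?_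
    rw [← Finset.sum_add_distrib]
    exact Finset.sum_congr rfl fun j _ => by ring
  -- expand the RHS matrix entries
  have hRHS : (∑ i, ∑ j,
      ((σ ^ 2)⁻¹ • (Matrix.diagonal wv *
        (Klam σ lam Y * Matrix.diagonal wv * Ymat Y - v1mat σ π Y))) i j * V i j)
      = ∑ i, ∑ t, (σ ^ 2)⁻¹ *
          (wv i * ((∑ j, Klam σ lam Y i j * wv j * Y j t) - v1 σ π (Y i) t)) * V i t := by
    refine Finset.sum_congr rfl fun i _ => Finset.sum_congr rfl fun t _ => ?_
    congr 1
    rw [Matrix.smul_apply, Matrix.diagonal_mul, Matrix.sub_apply, Matrix.mul_apply]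
    simp only [Matrix.mul_diagonal, Ymat, v1mat, Matrix.of_apply, smul_eq_mul]
  rw [hRHS]
  have hT : (∑ i, ∑ j, (wv i * (Klam σ lam Y i j * ωD σ lam π Y j V + wv j * αD σ Y i j V)
        + (Klam σ lam Y i j * wv j) * ωD σ lam π Y i V))
      = (((∑ i, bv i * ωD σ lam π Y i V)
          + ∑ i, ∑ j, wv i * (wv j * αD σ Y i j V))
        + ∑ i, bv i * ωD σ lam π Y i V) := by
    simp only [mul_add, Finset.sum_add_distrib]
    rw [hω1, hω2]
  have hS : (∑ i, (wv i * βD σ π Y i V + bv i * ωD σ lam π Y i V))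
      = ((∑ i, wv i * ((σ ^ 2)⁻¹ * ∑ t, (v1 σ π (Y i) t - v0 σ π (Y i) * Y i t) * V i t))
        + ∑ i, bv i * ωD σ lam π Y i V) := by
    rw [Finset.sum_add_distrib]
    simp only [hβv]
  rw [hS, hT]
  -- cancel the ω terms by pure algebra and push into a single sum over i
  have halg : ∀ A B C : ℝ, (1/2 : ℝ) * ((0 - 2*(A + B)) + ((B + C) + B)) = -A + (1/2)*C := by
    intros; ring
  rw [halg, hαsum]
  rw [← Finset.sum_neg_distrib, Finset.mul_sum, ← Finset.sum_add_distrib]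
  refine Finset.sum_congr rfl fun i _ => ?_
  -- now a per-i identity
  have hswap2 : (∑ j, 2 * ((wv i * wv j * (-(σ ^ 2)⁻¹ * ker σ (Y i) (Y j))) *
      ∑ t, (Y i t - Y j t) * V i t))
      = ∑ t, ∑ j, 2 * ((wv i * wv j * (-(σ ^ 2)⁻¹ * ker σ (Y i) (Y j))) *
          ((Y i t - Y j t) * V i t)) := by
    rw [Finset.sum_comm]
    refine Finset.sum_congr rfl fun j _ => ?_
    simp only [Finset.mul_sum]
  rw [hswap2]
  have h1 : -(wv i * ((σ ^ 2)⁻¹ * ∑ t, (v1 σ π (Y i) t - v0 σ π (Y i) * Y i t) * V i t))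
      = ∑ t, -(wv i * ((σ ^ 2)⁻¹ * ((v1 σ π (Y i) t - v0 σ π (Y i) * Y i t) * V i t))) := by
    rw [Finset.mul_sum, Finset.mul_sum, ← Finset.sum_neg_distrib]
  have h2 : (1/2 : ℝ) * (∑ t, ∑ j, 2 * ((wv i * wv j * (-(σ ^ 2)⁻¹ * ker σ (Y i) (Y j))) *
      ((Y i t - Y j t) * V i t)))
      = ∑ t, ∑ j, ((wv i * wv j * (-(σ ^ 2)⁻¹ * ker σ (Y i) (Y j))) *
          ((Y i t - Y j t) * V i t)) := by
    rw [Finset.mul_sum]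
    refine Finset.sum_congr rfl fun t _ => ?_
    rw [Finset.mul_sum]
    exact Finset.sum_congr rfl fun j _ => by ring
  rw [h1, h2, ← Finset.sum_add_distrib]
  refine Finset.sum_congr rfl fun t _ => ?_
  -- per-(i,t) identity
  have hLj : (∑ j, ((wv i * wv j * (-(σ ^ 2)⁻¹ * ker σ (Y i) (Y j))) *
      ((Y i t - Y j t) * V i t)))
      = (-(σ ^ 2)⁻¹) * wv i * V i t *
          ((∑ j, ker σ (Y i) (Y j) * wv j) * Y i t
            - ∑ j, ker σ (Y i) (Y j) * wv j * Y j t) := by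
    have e1 : (∑ j, ker σ (Y i) (Y j) * wv j) * Y i t
        = ∑ j, ker σ (Y i) (Y j) * wv j * Y i t := Finset.sum_mul _ _ _
    rw [e1, ← Finset.sum_sub_distrib, Finset.mul_sum]
    exact Finset.sum_congr rfl fun j _ => by ring
  rw [hLj]
  have hsum_ite : (∑ j, Klam σ lam Y i j * wv j * Y j t)
      = (∑ j, ker σ (Y i) (Y j) * wv j * Y j t) + lam * wv i * Y i t := by
    have e : ∀ j, Klam σ lam Y i j * wv j * Y j t
        = ker σ (Y i) (Y j) * wv j * Y j t
          + (if i = j then lam * wv j * Y j t else 0) := by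
      intro j
      rw [Klam_apply]
      split <;> ring
    simp only [e, Finset.sum_add_distrib]
    rw [Finset.sum_ite_eq Finset.univ i (fun j => lam * wv j * Y j t)]
    simp
  have hPrel : (∑ j, ker σ (Y i) (Y j) * wv j) = bv i - lam * wv i := by
    have h := hrel i
    have e : ∀ j, Klam σ lam Y i j * wv j
        = ker σ (Y i) (Y j) * wv j + (if i = j then lam * wv j else 0) := by
      intro j
      rw [Klam_apply]
      split <;> ring
    rw [Finset.sum_congr rfl (fun j _ => e j), Finset.sum_add_distrib,
      Finset.sum_ite_eq Finset.univ i (fun j => lam * wv j)] at h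
    simp only [Finset.mem_univ, if_true] at h
    linarith
  rw [hsum_ite, hPrel]
  have hbvi : v0 σ π (Y i) = bv i := rfl
  rw [hbvi]
  ring
end
end

section
/- Let d ≥ 1, σ > 0, and let π be a finite Borel measure on ℝ^d with ∫‖x‖ dπ(x) < ∞. Then the kernel mean embedding v0 : ℝ^d → ℝ is differentiable at every y ∈ ℝ^d with gradient ∇v0(y) = σ^{-2} ( v1(y) − y · v0(y) ). Consequently, if π is nonzero then v0(y) > 0 for every y and σ² ∇(log v0)(y) = v1(y)/v0(y) − y. -/
open MeasureTheory

noncomputable section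

open InnerProductSpace

lemma ker_pos {d : ℕ} (σ : ℝ) (x y : Euc d) : 0 < ker σ x y := Real.exp_pos _

lemma ker_le_one {d : ℕ} {σ : ℝ} (hσ : 0 < σ) (x y : Euc d) : ker σ x y ≤ 1 := by
  rw [ker, Real.exp_le_one_iff]
  apply div_nonpos_of_nonpos_of_nonneg
  · simpa using sq_nonneg ‖x - y‖
  · positivity

lemma ker_continuous {d : ℕ} (σ : ℝ) (y : Euc d) : Continuous (fun x => ker σ x y) := by
  unfold ker
  fun_prop

lemma ker_hasFDerivAt {d : ℕ} {σ : ℝ} (hσ : 0 < σ) (x z : Euc d) :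
    HasFDerivAt (fun y => ker σ x y)
      (toDual ℝ (Euc d) ((σ ^ 2)⁻¹ • (ker σ x z • (x - z)))) z := by
  have hsub : HasFDerivAt (fun y : Euc d => x - y) (-(ContinuousLinearMap.id ℝ (Euc d))) z :=
    (hasFDerivAt_id z).const_sub x
  have hq : HasFDerivAt (fun y : Euc d => (inner ℝ (x - y) (x - y) : ℝ))
      ((fderivInnerCLM ℝ (x - z, x - z)).comp
        ((-(ContinuousLinearMap.id ℝ (Euc d))).prod (-(ContinuousLinearMap.id ℝ (Euc d))))) z :=
    hsub.inner ℝ hsub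
  have he := ((hq.const_mul (-(2 * σ ^ 2))⁻¹).exp)
  have hfun : (fun y : Euc d => Real.exp ((-(2 * σ ^ 2))⁻¹ * (inner ℝ (x - y) (x - y) : ℝ)))
      = fun y => ker σ x y := by
    funext y
    rw [ker, real_inner_self_eq_norm_sq]
    ring_nf
  rw [hfun] at he
  refine HasFDerivAt.congr_fderiv he ?_
  ext v
  have h1 : ((-(2 * σ ^ 2))⁻¹ * (inner ℝ (x - z) (x - z) : ℝ)) = -‖x - z‖ ^ 2 / (2 * σ ^ 2) := by
    rw [real_inner_self_eq_norm_sq]; ring_nf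
  have hK : Real.exp ((-(2 * σ ^ 2))⁻¹ * (inner ℝ (x - z) (x - z) : ℝ)) = ker σ x z := by
    rw [h1]; rfl
  simp only [toDual_apply_apply, ContinuousLinearMap.smul_apply, ContinuousLinearMap.coe_comp',
    Function.comp_apply, ContinuousLinearMap.prod_apply, ContinuousLinearMap.neg_apply,
    ContinuousLinearMap.coe_id', id_eq, fderivInnerCLM_apply, smul_eq_mul, hK]
  rw [real_inner_smul_left, real_inner_smul_left, real_inner_comm (x - z) (-v),
    inner_neg_right]
  have hσ2 : σ ^ 2 ≠ 0 := by positivity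
  field_simp
  ring

section main
variable {d : ℕ} {σ : ℝ} (hσ : 0 < σ) (π : Measure (Euc d)) [IsFiniteMeasure π]

lemma ker_integrable (hσ : 0 < σ) (y : Euc d) : Integrable (fun x => ker σ x y) π := by
  refine (integrable_const (1 : ℝ)).mono' ((ker_continuous σ y).aestronglyMeasurable) ?_
  filter_upwards with x
  rw [Real.norm_eq_abs, abs_of_pos (ker_pos σ x y)]
  exact ker_le_one hσ x y

lemma ker_smul_integrable (hσ : 0 < σ) (hπ : Integrable (fun x => ‖x‖) π) (y : Euc d) :
    Integrable (fun x => ker σ x y • x) π := by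
  refine hπ.mono' ?_ ?_
  · exact ((ker_continuous σ y).smul continuous_id).aestronglyMeasurable
  · filter_upwards with x
    rw [norm_smul, Real.norm_eq_abs, abs_of_pos (ker_pos σ x y)]
    calc ker σ x y * ‖x‖ ≤ 1 * ‖x‖ :=
          mul_le_mul_of_nonneg_right (ker_le_one hσ x y) (norm_nonneg x)
      _ = ‖x‖ := one_mul _

lemma v0_hasFDerivAt (hσ : 0 < σ) (hπ : Integrable (fun x => ‖x‖) π) (y : Euc d) :
    HasFDerivAt (fun z => v0 σ π z)
      (toDual ℝ (Euc d) ((σ ^ 2)⁻¹ • (v1 σ π y - v0 σ π y • y))) y := by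
  have hσ2 : (0:ℝ) < σ ^ 2 := by positivity
  set G : Euc d → Euc d → Euc d := fun z x => (σ ^ 2)⁻¹ • (ker σ x z • (x - z)) with hG
  have key : HasFDerivAt (fun z => ∫ x, ker σ x z ∂π)
      (∫ x, toDual ℝ (Euc d) (G y x) ∂π) y := by
    apply hasFDerivAt_integral_of_dominated_of_fderiv_le
      (F' := fun z x => toDual ℝ (Euc d) (G z x))
      (bound := fun x => (σ ^ 2)⁻¹ * (‖x‖ + (‖y‖ + 1))) (Metric.ball_mem_nhds y one_pos)
    · filter_upwards with z
      exact (ker_continuous σ z).aestronglyMeasurable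
    · exact ker_integrable π hσ y
    · apply Continuous.aestronglyMeasurable
      exact (toDual ℝ (Euc d)).continuous.comp
        (by have := ker_continuous σ y; fun_prop :
          Continuous fun x => (σ ^ 2)⁻¹ • (ker σ x y • (x - y)))
    · filter_upwards with x
      intro z hz
      rw [(toDual ℝ (Euc d)).norm_map, hG]
      simp only
      rw [norm_smul, norm_smul, Real.norm_eq_abs, Real.norm_eq_abs,
        abs_of_pos (ker_pos σ x z), abs_of_pos (inv_pos.2 hσ2)]
      apply mul_le_mul_of_nonneg_left _ (le_of_lt (inv_pos.2 hσ2))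
      calc ker σ x z * ‖x - z‖ ≤ 1 * ‖x - z‖ :=
            mul_le_mul_of_nonneg_right (ker_le_one hσ x z) (norm_nonneg _)
        _ = ‖x - z‖ := one_mul _
        _ ≤ ‖x‖ + ‖z‖ := norm_sub_le x z
        _ ≤ ‖x‖ + (‖y‖ + 1) := by
            have : ‖z‖ ≤ ‖y‖ + 1 := by
              have hz' : ‖z - y‖ < 1 := by simpa [dist_eq_norm] using hz
              calc ‖z‖ = ‖z - y + y‖ := by rw [sub_add_cancel]
                _ ≤ ‖z - y‖ + ‖y‖ := norm_add_le _ _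
                _ ≤ ‖y‖ + 1 := by linarith
            linarith
    · exact (hπ.add (integrable_const _)).const_mul _
    · filter_upwards with x
      intro z _
      exact ker_hasFDerivAt hσ x z
  have hint : ∫ x, toDual ℝ (Euc d) (G y x) ∂π
      = toDual ℝ (Euc d) ((σ ^ 2)⁻¹ • (v1 σ π y - v0 σ π y • y)) := by
    rw [show (fun x => toDual ℝ (Euc d) (G y x))
        = fun x => (toDual ℝ (Euc d)).toLinearIsometry (G y x) from rfl]
    rw [LinearIsometry.integral_comp_comm]
    have hGint : ∫ x, G y x ∂π = (σ ^ 2)⁻¹ • (v1 σ π y - v0 σ π y • y) := by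
      have h2 : ∀ x : Euc d, G y x = (σ ^ 2)⁻¹ • (ker σ x y • x - ker σ x y • y) := by
        intro x; simp only [hG, smul_sub]
      simp_rw [h2]
      rw [integral_smul, integral_sub (ker_smul_integrable π hσ hπ y)
        ((ker_integrable π hσ y).smul_const y), integral_smul_const]
      rfl
    rw [hGint]
    rfl
  rw [hint] at key
  exact key

end main

/-- `v0` is differentiable with `∇v0(y) = σ⁻²(v1(y) − y v0(y))`;
consequently, if `π ≠ 0` then `v0 > 0` everywhere and
`σ² ∇(log v0)(y) = v1(y)/v0(y) − y`. -/
theorem v0_gradient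
    (d : ℕ) (hd : 1 ≤ d) (σ : ℝ) (hσ : 0 < σ)
    (π : Measure (Euc d)) [IsFiniteMeasure π] (hπ : Integrable (fun x => ‖x‖) π) :
    (∀ y : Euc d,
      HasGradientAt (fun z => v0 σ π z) ((σ ^ 2)⁻¹ • (v1 σ π y - v0 σ π y • y)) y) ∧
    (π ≠ 0 →
      (∀ y : Euc d, 0 < v0 σ π y) ∧
      ∀ y : Euc d,
        σ ^ 2 • gradient (fun z => Real.log (v0 σ π z)) y =
          (v0 σ π y)⁻¹ • v1 σ π y - y) := by
  have hgrad : ∀ y : Euc d,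
      HasGradientAt (fun z => v0 σ π z) ((σ ^ 2)⁻¹ • (v1 σ π y - v0 σ π y • y)) y :=
    fun y => v0_hasFDerivAt π hσ hπ y
  refine ⟨hgrad, fun hπ0 => ?_⟩
  have hpos : ∀ y : Euc d, 0 < v0 σ π y := by
    intro y
    rw [v0, integral_pos_iff_support_of_nonneg
      (fun x => (ker_pos σ x y).le) (ker_integrable π hσ y)]
    have hsupp : Function.support (fun x => ker σ x y) = Set.univ :=
      Set.eq_univ_of_forall fun x => (ker_pos σ x y).ne'
    rw [hsupp]
    exact Measure.measure_univ_pos.2 hπ0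
  refine ⟨hpos, fun y => ?_⟩
  have hlog0 := (Real.hasDerivAt_log (hpos y).ne').comp_hasFDerivAt y
    (hgrad y).hasFDerivAt
  have hlog : HasGradientAt (fun z => Real.log (v0 σ π z))
      ((v0 σ π y)⁻¹ • ((σ ^ 2)⁻¹ • (v1 σ π y - v0 σ π y • y))) y := by
    rw [hasGradientAt_iff_hasFDerivAt, _root_.map_smul]
    exact hlog0
  rw [hlog.gradient, smul_smul, smul_smul]
  have hσ2 : (σ:ℝ) ^ 2 ≠ 0 := by positivity
  rw [show σ ^ 2 * (v0 σ π y)⁻¹ * (σ ^ 2)⁻¹ = (v0 σ π y)⁻¹ by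
    rw [mul_comm (σ ^ 2), mul_assoc, mul_inv_cancel₀ hσ2, mul_one]]
  rw [smul_sub, smul_smul, inv_mul_cancel₀ (hpos y).ne', one_smul]
end
end

section
/- Let d ≥ 1, M ≥ 1, σ > 0, λ > 0, and let π be a finite Borel measure on ℝ^d with ∫‖x‖ dπ(x) < ∞. For each i ∈ {1,…,M} and j ∈ {1,…,d}, denote by ∂_{ij} the partial derivative with respect to the j-th coordinate of y_i. Then for every configuration Y = (y_1,…,y_M) ∈ (ℝ^d)^M, the function F_{M,λ}(Y) = inf_{w ∈ ℝ^M} (1/2)(C_π − 2⟨w, v0(Y)⟩ + wᵀ K_λ(Y) w) satisfies the envelope identity ∂_{ij} F_{M,λ}(Y) = −⟨ w*_λ(Y), ∂_{ij} v0(Y) ⟩ + (1/2) ⟨ w*_λ(Y), (∂_{ij} K(Y)) w*_λ(Y) ⟩, where ∂_{ij} v0(Y) ∈ ℝ^M and ∂_{ij} K(Y) ∈ ℝ^{M×M} are the entrywise partial derivatives. -/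
open MeasureTheory Matrix

noncomputable section

/-- The path `t ↦ Y` with the `j`-th coordinate of `y_i` perturbed by `t`. -/
def Ypath {d M : ℕ} (Y : Fin M → Euc d) (i : Fin M) (j : Fin d) (t : ℝ) : Fin M → Euc d :=
  Function.update Y i (Y i + t • EuclideanSpace.single j (1 : ℝ))

lemma inner_pow_psd {d M n : ℕ} (Z : Fin M → Euc d) (c : Fin M → ℝ) :
    0 ≤ ∑ k, ∑ l, c k * c l * (inner ℝ (Z k) (Z l) : ℝ) ^ n := by
  have h1 : ∀ x y : Euc d, (inner ℝ x y : ℝ) ^ n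
      = ∑ g : Fin n → Fin d, (∏ m, x (g m)) * (∏ m, y (g m)) := by
    intro x y
    have : (inner ℝ x y : ℝ) = ∑ t, x t * y t := by
      simp [PiLp.inner_apply, RCLike.inner_apply, mul_comm]
    rw [this]
    have h2 : (∑ t, x t * y t) ^ n = ∏ _m : Fin n, ∑ t, x t * y t := by
      simp [Finset.prod_const]
    rw [h2, Finset.prod_univ_sum]
    simp [Fintype.piFinset_univ, Finset.prod_mul_distrib]
  have e1 : ∑ k, ∑ l, c k * c l * (inner ℝ (Z k) (Z l) : ℝ) ^ n
      = ∑ g : Fin n → Fin d, (∑ k, c k * ∏ m, Z k (g m)) ^ 2 := by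
    simp only [h1, Finset.mul_sum]
    calc ∑ k, ∑ l, ∑ g : Fin n → Fin d,
          c k * c l * ((∏ m, Z k (g m)) * (∏ m, Z l (g m)))
        = ∑ k, ∑ g : Fin n → Fin d, ∑ l,
          c k * c l * ((∏ m, Z k (g m)) * (∏ m, Z l (g m))) :=
          Finset.sum_congr rfl (fun k _ => Finset.sum_comm)
      _ = ∑ g : Fin n → Fin d, ∑ k, ∑ l,
          c k * c l * ((∏ m, Z k (g m)) * (∏ m, Z l (g m))) := Finset.sum_comm
      _ = ∑ g : Fin n → Fin d, (∑ k, c k * ∏ m, Z k (g m)) ^ 2 := by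
          apply Finset.sum_congr rfl; intro g _
          rw [sq, Finset.sum_mul_sum]
          apply Finset.sum_congr rfl; intro k _
          apply Finset.sum_congr rfl; intro l _
          ring
  rw [e1]
  exact Finset.sum_nonneg fun g _ => sq_nonneg _

lemma ker_psd {d M : ℕ} {σ : ℝ} (hσ : 0 < σ) (Z : Fin M → Euc d) (w : Fin M → ℝ) :
    0 ≤ ∑ k, ∑ l, w k * ker σ (Z k) (Z l) * w l := by
  have hσ2 : (σ:ℝ)^2 ≠ 0 := pow_ne_zero _ hσ.ne'
  set c : Fin M → ℝ := fun k => w k * Real.exp (-‖Z k‖^2 / (2*σ^2)) with hc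
  set f : ℕ → Fin M → Fin M → ℝ := fun n k l =>
    ((σ^2)⁻¹^n / n.factorial) * (c k * c l * (inner ℝ (Z k) (Z l) : ℝ)^n) with hf
  have hsumm : ∀ k l, Summable (fun n => f n k l) := by
    intro k l
    have : (fun n => f n k l)
        = fun n => (c k * c l) * (((σ^2)⁻¹ * (inner ℝ (Z k) (Z l) : ℝ))^n / n.factorial) := by
      funext n; rw [hf]; simp only [mul_pow]; ring
    rw [this]
    exact (Real.summable_pow_div_factorial _).mul_left _
  have h3 : ∀ k l, w k * ker σ (Z k) (Z l) * w l = ∑' n, f n k l := by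
    intro k l
    have hstep : w k * ker σ (Z k) (Z l) * w l
        = (c k * c l) * Real.exp ((σ^2)⁻¹ * (inner ℝ (Z k) (Z l) : ℝ)) := by
      have hn : -‖Z k - Z l‖^2 / (2*σ^2)
          = -‖Z k‖^2/(2*σ^2) + -‖Z l‖^2/(2*σ^2) + (σ^2)⁻¹ * (inner ℝ (Z k) (Z l) : ℝ) := by
        rw [norm_sub_sq_real]; field_simp; ring
      rw [ker, hn, Real.exp_add, Real.exp_add, hc]
      simp only
      ring
    rw [hstep, Real.exp_eq_exp_ℝ, NormedSpace.exp_eq_tsum_div, ← tsum_mul_left]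
    apply tsum_congr; intro n
    rw [hf]; simp only [mul_pow]; ring
  calc (0:ℝ) ≤ ∑' n, ∑ k, ∑ l, f n k l := by
        apply tsum_nonneg; intro n
        have : ∑ k, ∑ l, f n k l
            = ((σ^2)⁻¹^n / n.factorial) * ∑ k, ∑ l, c k * c l * (inner ℝ (Z k) (Z l) : ℝ)^n := by
          rw [Finset.mul_sum]; apply Finset.sum_congr rfl; intro k _
          rw [Finset.mul_sum]
        rw [this]
        apply mul_nonneg (by positivity) (inner_pow_psd Z c)
    _ = ∑ k, ∑ l, ∑' n, f n k l := by
        rw [Summable.tsum_finsetSum (fun k _ => summable_sum (fun l _ => hsumm k l))]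
        apply Finset.sum_congr rfl; intro k _
        rw [Summable.tsum_finsetSum (fun l _ => hsumm k l)]
    _ = ∑ k, ∑ l, w k * ker σ (Z k) (Z l) * w l := by
        apply Finset.sum_congr rfl; intro k _
        apply Finset.sum_congr rfl; intro l _
        exact (h3 k l).symm

lemma Klam_quad {d M : ℕ} (σ lam : ℝ) (Y : Fin M → Euc d) (w : Fin M → ℝ) :
    w ⬝ᵥ (Klam σ lam Y *ᵥ w)
      = (∑ k, ∑ l, w k * ker σ (Y k) (Y l) * w l) + lam * ∑ k, w k * w k := by
  simp only [Klam, Matrix.add_mulVec, Matrix.smul_mulVec, Matrix.one_mulVec,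
    dotProduct_add, dotProduct_smul]
  congr 1
  · simp only [dotProduct, mulVec, Matrix.of_apply, Finset.mul_sum]
    apply Finset.sum_congr rfl; intro k _
    apply Finset.sum_congr rfl; intro l _
    ring

lemma Klam_quad_nonneg {d M : ℕ} {σ lam : ℝ} (hσ : 0 < σ) (hlam : 0 < lam)
    (Y : Fin M → Euc d) (w : Fin M → ℝ) : 0 ≤ w ⬝ᵥ (Klam σ lam Y *ᵥ w) := by
  rw [Klam_quad]
  have h2 : 0 ≤ lam * ∑ k, w k * w k :=
    mul_nonneg hlam.le (Finset.sum_nonneg fun k _ => mul_self_nonneg _)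
  linarith [ker_psd hσ Y w]

lemma Klam_transpose {d M : ℕ} (σ lam : ℝ) (Y : Fin M → Euc d) :
    (Klam σ lam Y)ᵀ = Klam σ lam Y := by
  ext k l
  simp only [Klam, Matrix.transpose_apply, Matrix.add_apply, Matrix.of_apply,
    Matrix.smul_apply, Matrix.one_apply, smul_eq_mul]
  rw [ker, ker, norm_sub_rev]
  by_cases h : l = k
  · subst h; simp
  · simp [h, Ne.symm h]

lemma Klam_posDef {d M : ℕ} {σ lam : ℝ} (hσ : 0 < σ) (hlam : 0 < lam)
    (Y : Fin M → Euc d) : (Klam σ lam Y).PosDef := by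
  rw [Matrix.posDef_iff_dotProduct_mulVec]
  constructor
  · show (Klam σ lam Y)ᴴ = Klam σ lam Y
    rw [Matrix.conjTranspose_eq_transpose_of_trivial, Klam_transpose]
  · intro x hx
    rw [star_trivial, Klam_quad]
    have h1 : 0 < ∑ k, x k * x k := by
      obtain ⟨k, hk⟩ := Function.ne_iff.mp hx
      exact Finset.sum_pos' (fun l _ => mul_self_nonneg _)
        ⟨k, Finset.mem_univ k, mul_self_pos.mpr hk⟩
    have := ker_psd hσ Y x
    nlinarith

lemma Klam_mulVec_inv {d M : ℕ} {σ lam : ℝ} (hσ : 0 < σ) (hlam : 0 < lam)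
    (Y : Fin M → Euc d) (v : Fin M → ℝ) :
    Klam σ lam Y *ᵥ ((Klam σ lam Y)⁻¹ *ᵥ v) = v := by
  rw [Matrix.mulVec_mulVec,
    Matrix.mul_nonsing_inv _ ((Matrix.isUnit_iff_isUnit_det _).mp (Klam_posDef hσ hlam Y).isUnit),
    Matrix.one_mulVec]

lemma Klam_symm_dot {d M : ℕ} (σ lam : ℝ) (Y : Fin M → Euc d) (u u' : Fin M → ℝ) :
    u ⬝ᵥ (Klam σ lam Y *ᵥ u') = u' ⬝ᵥ (Klam σ lam Y *ᵥ u) := by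
  rw [Matrix.dotProduct_mulVec, ← Matrix.mulVec_transpose, Klam_transpose, dotProduct_comm]

lemma FM_eq {d M : ℕ} {σ lam : ℝ} (hσ : 0 < σ) (hlam : 0 < lam)
    (π : Measure (Euc d)) (Y : Fin M → Euc d) :
    FM σ lam π Y = (1 / 2) * (Cpi σ π - v0vec σ π Y ⬝ᵥ wstar σ lam π Y) := by
  set A := Klam σ lam Y with hA
  set v := v0vec σ π Y with hv
  set w0 := wstar σ lam π Y with hw0
  have hAw0 : A *ᵥ w0 = v := Klam_mulVec_inv hσ hlam Y v
  have key : ∀ w : Fin M → ℝ,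
      (1/2) * (Cpi σ π - 2 * (w ⬝ᵥ v) + w ⬝ᵥ (A *ᵥ w))
        = (1/2) * (Cpi σ π - v ⬝ᵥ w0) + (1/2) * ((w - w0) ⬝ᵥ (A *ᵥ (w - w0))) := by
    intro w
    have e1 : (w - w0) ⬝ᵥ (A *ᵥ (w - w0))
        = w ⬝ᵥ (A *ᵥ w) - 2 * (w ⬝ᵥ v) + v ⬝ᵥ w0 := by
      rw [Matrix.mulVec_sub, dotProduct_sub, sub_dotProduct, sub_dotProduct, hAw0]
      have e2 : w0 ⬝ᵥ (A *ᵥ w) = w ⬝ᵥ v := by rw [Klam_symm_dot, hAw0]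
      have e3 : w0 ⬝ᵥ v = v ⬝ᵥ w0 := dotProduct_comm _ _
      have e4 : w ⬝ᵥ v = w ⬝ᵥ v := rfl
      rw [e2, e3]
      ring_nf
    rw [e1]; ring
  have hmin : ∀ w : Fin M → ℝ,
      (1/2) * (Cpi σ π - v ⬝ᵥ w0)
        ≤ (1/2) * (Cpi σ π - 2 * (w ⬝ᵥ v) + w ⬝ᵥ (A *ᵥ w)) := by
    intro w
    rw [key w]
    have := Klam_quad_nonneg hσ hlam Y (w - w0)
    rw [← hA] at this
    linarith
  apply le_antisymm
  · have : (1/2) * (Cpi σ π - 2 * (w0 ⬝ᵥ v) + w0 ⬝ᵥ (A *ᵥ w0))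
        = (1/2) * (Cpi σ π - v ⬝ᵥ w0) := by
      rw [key w0]; simp
    calc FM σ lam π Y ≤ (1/2) * (Cpi σ π - 2 * (w0 ⬝ᵥ v) + w0 ⬝ᵥ (A *ᵥ w0)) :=
          ciInf_le ⟨(1/2) * (Cpi σ π - v ⬝ᵥ w0), by rintro x ⟨w, rfl⟩; exact hmin w⟩ w0
      _ = _ := this
  · exact le_ciInf hmin

lemma Ypath_apply {d M : ℕ} (Y : Fin M → Euc d) (i : Fin M) (j : Fin d) (t : ℝ) (k : Fin M) :
    Ypath Y i j t k
      = Y k + ((if k = i then (1:ℝ) else 0) * t) • EuclideanSpace.single j (1 : ℝ) := by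
  rw [Ypath, Function.update_apply]
  by_cases h : k = i
  · subst h; simp
  · simp [h]

lemma norm_sub_smul_single {d : ℕ} (j : Fin d) (a : Euc d) (t : ℝ) :
    ‖a - t • EuclideanSpace.single j (1:ℝ)‖^2
      = ‖a‖^2 - t * (2 * (inner ℝ a (EuclideanSpace.single j (1:ℝ)) : ℝ)) + t^2 := by
  rw [norm_sub_sq_real, real_inner_smul_right, norm_smul]
  have h1 : ‖EuclideanSpace.single j (1:ℝ)‖ = 1 := by
    rw [EuclideanSpace.norm_single]; norm_num
  rw [h1]
  simp [mul_pow, sq_abs]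
  ring

lemma v0_path_hasDerivAt {d M : ℕ} {σ : ℝ} (hσ : 0 < σ)
    (π : Measure (Euc d)) [IsFiniteMeasure π] (hπ : Integrable (fun x => ‖x‖) π)
    (Y : Fin M → Euc d) (i : Fin M) (j : Fin d) (k : Fin M) :
    DifferentiableAt ℝ (fun t : ℝ => v0 σ π (Ypath Y i j t k)) 0 := by
  by_cases hk : k = i
  swap
  · have : (fun t : ℝ => v0 σ π (Ypath Y i j t k)) = fun _ => v0 σ π (Y k) := by
      funext t
      rw [Ypath_apply]
      simp [hk]
    rw [this]
    exact differentiableAt_const _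
  subst hk
  set e := (EuclideanSpace.single j (1:ℝ) : Euc d) with he
  have hσ2 : (0:ℝ) < 2 * σ^2 := by positivity
  set F : ℝ → Euc d → ℝ := fun t x =>
    Real.exp (-(‖x - Y k‖^2 - t * (2 * (inner ℝ (x - Y k) e : ℝ)) + t^2) / (2*σ^2)) with hF
  set F' : ℝ → Euc d → ℝ := fun t x =>
    Real.exp (-(‖x - Y k‖^2 - t * (2 * (inner ℝ (x - Y k) e : ℝ)) + t^2) / (2*σ^2))
      * (-(0 - 2 * (inner ℝ (x - Y k) e : ℝ) + 2*t) / (2*σ^2)) with hF'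
  have hFeq : ∀ t : ℝ, v0 σ π (Ypath Y k j t k) = ∫ x, F t x ∂π := by
    intro t
    rw [v0]
    refine integral_congr_ae (Filter.Eventually.of_forall fun x => ?_)
    have hx : x - Ypath Y k j t k = (x - Y k) - t • e := by
      rw [Ypath_apply]
      simp [he, sub_add_eq_sub_sub]
    simp only [ker, hF]
    rw [hx, norm_sub_smul_single]
  have hderiv : ∀ (x : Euc d) (t : ℝ), HasDerivAt (fun s => F s x) (F' t x) t := by
    intro x t
    set b : ℝ := (inner ℝ (x - Y k) e : ℝ)
    have h1 : HasDerivAt (fun s : ℝ => ‖x - Y k‖^2 - s * (2*b) + s^2)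
        (0 - 2*b + 2*t) t := by
      have p1 : HasDerivAt (fun s : ℝ => s * (2*b)) (2*b) t := hasDerivAt_mul_const (2*b)
      have p2 : HasDerivAt (fun s : ℝ => s^2) (2*t) t := by
        simpa using hasDerivAt_pow 2 t
      have p0 : HasDerivAt (fun _ : ℝ => ‖x - Y k‖^2) 0 t := hasDerivAt_const _ _
      have := (p0.sub p1).add p2
      exact this
    have h2 := ((h1.neg).div_const (2*σ^2)).exp
    exact h2
  have hci : Continuous fun x : Euc d => (inner ℝ (x - Y k) e : ℝ) :=
    (continuous_id.sub continuous_const).inner continuous_const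
  have hcn : Continuous fun x : Euc d => ‖x - Y k‖^2 :=
    ((continuous_id.sub continuous_const).norm).pow 2
  have hFcont : ∀ t : ℝ, Continuous (F t) := by
    intro t
    apply Real.continuous_exp.comp
    apply Continuous.div_const
    apply Continuous.neg
    exact (hcn.sub (continuous_const.mul (continuous_const.mul hci))).add continuous_const
  have hF'cont : Continuous (F' 0) := by
    apply Continuous.mul (hFcont 0)
    apply Continuous.div_const
    apply Continuous.neg
    exact (continuous_const.sub (continuous_const.mul hci)).add continuous_const
  set bound : Euc d → ℝ := fun x => (2 * (‖x‖ + ‖Y k‖) + 2) / (2*σ^2) with hbd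
  have hbound_int : Integrable bound π := by
    apply Integrable.div_const
    apply Integrable.add _ (integrable_const _)
    exact (hπ.add (integrable_const _)).const_mul 2
  have hF0_int : Integrable (F 0) π := by
    apply Integrable.mono' (integrable_const (1:ℝ)) ((hFcont 0).aestronglyMeasurable)
    filter_upwards with x
    rw [hF]
    simp only [Real.norm_eq_abs, abs_of_pos (Real.exp_pos _)]
    rw [Real.exp_le_one_iff]
    have := norm_sub_smul_single j (x - Y k) 0
    have hnn : (0:ℝ) ≤ ‖x - Y k‖^2 - 0 * (2 * (inner ℝ (x - Y k) e : ℝ)) + 0^2 := by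
      rw [← norm_sub_smul_single j (x - Y k) 0]; positivity
    have : -(‖x - Y k‖^2 - 0 * (2 * (inner ℝ (x - Y k) e : ℝ)) + 0^2) ≤ 0 := by linarith
    apply div_nonpos_of_nonpos_of_nonneg ?_ (le_of_lt hσ2)
    simpa using this
  have h_bound : ∀ᵐ x ∂π, ∀ t ∈ Metric.ball (0:ℝ) 1, ‖F' t x‖ ≤ bound x := by
    filter_upwards with x t ht
    rw [Metric.mem_ball, Real.dist_eq, sub_zero] at ht
    rw [hF']
    simp only [Real.norm_eq_abs, abs_mul]
    have hb : |(inner ℝ (x - Y k) e : ℝ)| ≤ ‖x‖ + ‖Y k‖ := by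
      calc |(inner ℝ (x - Y k) e : ℝ)| ≤ ‖x - Y k‖ * ‖e‖ := abs_real_inner_le_norm _ _
        _ ≤ (‖x‖ + ‖Y k‖) * 1 := by
            apply mul_le_mul (norm_sub_le _ _) ?_ (norm_nonneg _) (by positivity)
            rw [he, EuclideanSpace.norm_single]; norm_num
        _ = ‖x‖ + ‖Y k‖ := mul_one _
    have hexp1 : |Real.exp (-(‖x - Y k‖^2 - t * (2 * (inner ℝ (x - Y k) e : ℝ)) + t^2) / (2*σ^2))| ≤ 1 := by
      rw [abs_of_pos (Real.exp_pos _), Real.exp_le_one_iff]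
      have hnn : (0:ℝ) ≤ ‖x - Y k‖^2 - t * (2 * (inner ℝ (x - Y k) e : ℝ)) + t^2 := by
        rw [← norm_sub_smul_single j (x - Y k) t]; positivity
      apply div_nonpos_of_nonpos_of_nonneg (by linarith) (le_of_lt hσ2)
    calc |Real.exp _| * |(-(0 - 2 * (inner ℝ (x - Y k) e : ℝ) + 2*t) / (2*σ^2))|
        ≤ 1 * |(-(0 - 2 * (inner ℝ (x - Y k) e : ℝ) + 2*t) / (2*σ^2))| := by
          apply mul_le_mul_of_nonneg_right hexp1 (abs_nonneg _)
      _ = |(-(0 - 2 * (inner ℝ (x - Y k) e : ℝ) + 2*t))| / (2*σ^2) := by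
          rw [one_mul, abs_div, abs_of_pos hσ2]
      _ ≤ (2 * (‖x‖ + ‖Y k‖) + 2) / (2*σ^2) := by
          gcongr
          have e1 : -(0 - 2 * (inner ℝ (x - Y k) e : ℝ) + 2*t)
              = 2 * (inner ℝ (x - Y k) e : ℝ) - 2*t := by ring
          rw [e1]
          have e2 := abs_sub (2 * (inner ℝ (x - Y k) e : ℝ)) (2*t)
          rw [abs_mul, abs_mul] at e2
          have e3 : |t| ≤ 1 := le_of_lt ht
          have e4 : |(2:ℝ)| = 2 := by norm_num
          rw [e4] at e2
          nlinarith [abs_nonneg (inner ℝ (x - Y k) e : ℝ)]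
      _ = bound x := rfl
  have key := hasDerivAt_integral_of_dominated_loc_of_deriv_le (μ := π)
    (F := F) (F' := F') (x₀ := (0:ℝ)) (bound := bound) (Metric.ball_mem_nhds 0 one_pos)
    (Filter.Eventually.of_forall fun t => (hFcont t).aestronglyMeasurable)
    hF0_int hF'cont.aestronglyMeasurable h_bound hbound_int
    (Filter.Eventually.of_forall fun x t _ => hderiv x t)
  have : (fun t : ℝ => v0 σ π (Ypath Y k j t k)) = fun t => ∫ x, F t x ∂π := funext hFeq
  rw [this]
  exact key.2.differentiableAt

lemma ker_path_diff {d M : ℕ} (σ : ℝ) (Y : Fin M → Euc d) (i : Fin M) (j : Fin d)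
    (k l : Fin M) :
    Differentiable ℝ (fun t : ℝ => ker σ (Ypath Y i j t k) (Ypath Y i j t l)) := by
  set e := (EuclideanSpace.single j (1:ℝ) : Euc d) with he
  set ck : ℝ := if k = i then (1:ℝ) else 0
  set cl : ℝ := if l = i then (1:ℝ) else 0
  have hx : ∀ t : ℝ, Ypath Y i j t k - Ypath Y i j t l
      = (Y k - Y l) - ((cl - ck) * t) • e := by
    intro t
    rw [Ypath_apply, Ypath_apply]
    show Y k + (ck * t) • e - (Y l + (cl * t) • e) = Y k - Y l - ((cl - ck) * t) • e
    module
  have heq : (fun t : ℝ => ker σ (Ypath Y i j t k) (Ypath Y i j t l))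
      = fun t => Real.exp (-(‖Y k - Y l‖^2 - ((cl - ck) * t) * (2 * (inner ℝ (Y k - Y l) e : ℝ))
          + ((cl - ck) * t)^2) / (2*σ^2)) := by
    funext t
    simp only [ker]
    rw [hx t, norm_sub_smul_single]
  rw [heq]
  apply Differentiable.exp
  apply Differentiable.div_const
  apply Differentiable.neg
  fun_prop

lemma det_path_diff {n : ℕ} (A : ℝ → Matrix (Fin n) (Fin n) ℝ)
    (h : ∀ k l, DifferentiableAt ℝ (fun t => A t k l) 0) :
    DifferentiableAt ℝ (fun t => (A t).det) 0 := by
  simp only [Matrix.det_apply]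
  apply DifferentiableAt.fun_sum
  intro p _
  have : (fun t => Equiv.Perm.sign p • ∏ m, A t (p m) m)
      = fun t => ((Equiv.Perm.sign p : ℤ) : ℝ) * ∏ m, A t (p m) m := by
    funext t
    rw [Units.smul_def, zsmul_eq_mul]
  rw [this]
  exact (DifferentiableAt.fun_finsetProd (fun m _ => h (p m) m)).const_mul _

/-- envelope identity: the partial derivative of `F_{M,λ}` with respect to
the `j`-th coordinate of `y_i` exists and equals
`−⟨w*_λ(Y), ∂_{ij} v0(Y)⟩ + (1/2)⟨w*_λ(Y), (∂_{ij} K(Y)) w*_λ(Y)⟩`. -/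
theorem envelope_identity
    (d M : ℕ) (hd : 1 ≤ d) (hM : 1 ≤ M) (σ lam : ℝ) (hσ : 0 < σ) (hlam : 0 < lam)
    (π : Measure (Euc d)) [IsFiniteMeasure π] (hπ : Integrable (fun x => ‖x‖) π)
    (Y : Fin M → Euc d) (i : Fin M) (j : Fin d) :
    HasDerivAt (fun t : ℝ => FM σ lam π (Ypath Y i j t))
      (-(wstar σ lam π Y ⬝ᵥ fun k => deriv (fun t : ℝ => v0 σ π (Ypath Y i j t k)) 0) +
        (1 / 2) *
          (wstar σ lam π Y ⬝ᵥ
            ((Matrix.of fun k l =>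
                deriv (fun t : ℝ => ker σ (Ypath Y i j t k) (Ypath Y i j t l)) 0) *ᵥ
              wstar σ lam π Y)))
      0 := by
  classical
  have hY0 : Ypath Y i j 0 = Y := by
    funext k
    rw [Ypath_apply]
    simp
  set v' : Fin M → ℝ := fun k => deriv (fun t : ℝ => v0 σ π (Ypath Y i j t k)) 0 with hv'
  set K' : Fin M → Fin M → ℝ :=
    fun k l => deriv (fun t : ℝ => ker σ (Ypath Y i j t k) (Ypath Y i j t l)) 0 with hK'
  set w' : Fin M → ℝ := fun k => deriv (fun t : ℝ => wstar σ lam π (Ypath Y i j t) k) 0 with hw'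
  have hAeq : ∀ k l : Fin M, (fun t : ℝ => Klam σ lam (Ypath Y i j t) k l)
      = fun t => ker σ (Ypath Y i j t k) (Ypath Y i j t l)
          + lam * (1 : Matrix (Fin M) (Fin M) ℝ) k l := by
    intro k l; funext t
    simp [Klam, Matrix.add_apply, Matrix.smul_apply, smul_eq_mul]
  have hAderiv : ∀ k l : Fin M,
      HasDerivAt (fun t : ℝ => Klam σ lam (Ypath Y i j t) k l) (K' k l) 0 := by
    intro k l
    rw [hAeq k l]
    exact (((ker_path_diff σ Y i j k l) 0).hasDerivAt).add_const _
  have hAdiff : ∀ k l : Fin M,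
      DifferentiableAt ℝ (fun t : ℝ => Klam σ lam (Ypath Y i j t) k l) 0 :=
    fun k l => (hAderiv k l).differentiableAt
  have hvdiff : ∀ k : Fin M,
      DifferentiableAt ℝ (fun t : ℝ => v0vec σ π (Ypath Y i j t) k) 0 :=
    fun k => v0_path_hasDerivAt hσ π hπ Y i j k
  have hvd : ∀ k : Fin M,
      HasDerivAt (fun t : ℝ => v0vec σ π (Ypath Y i j t) k) (v' k) 0 :=
    fun k => (v0_path_hasDerivAt hσ π hπ Y i j k).hasDerivAt
  have hadj : ∀ k l : Fin M, DifferentiableAt ℝ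
      (fun t : ℝ => (Klam σ lam (Ypath Y i j t)).adjugate k l) 0 := by
    intro k l
    have h1 : (fun t : ℝ => (Klam σ lam (Ypath Y i j t)).adjugate k l)
        = fun t => ((Klam σ lam (Ypath Y i j t)).updateRow l (Pi.single k 1)).det := by
      funext t; rw [Matrix.adjugate_apply]
    rw [h1]
    apply det_path_diff
    intro a b
    by_cases h : a = l
    · subst h
      have h2 : (fun t : ℝ => (Klam σ lam (Ypath Y i j t)).updateRow a (Pi.single k 1) a b)
          = fun _ : ℝ => (Pi.single k (1:ℝ) : Fin M → ℝ) b := by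
        funext t; rw [Matrix.updateRow_apply]; simp
      rw [h2]; exact differentiableAt_const _
    · have h2 : (fun t : ℝ => (Klam σ lam (Ypath Y i j t)).updateRow l (Pi.single k 1) a b)
          = fun t => Klam σ lam (Ypath Y i j t) a b := by
        funext t; rw [Matrix.updateRow_apply]; simp [h]
      rw [h2]; exact hAdiff a b
  have hdet : DifferentiableAt ℝ (fun t : ℝ => (Klam σ lam (Ypath Y i j t)).det) 0 :=
    det_path_diff _ hAdiff
  have hdet_ne : ∀ t : ℝ, (Klam σ lam (Ypath Y i j t)).det ≠ 0 :=
    fun t => (Klam_posDef hσ hlam (Ypath Y i j t)).det_pos.ne'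
  have hwrep : ∀ (t : ℝ) (k : Fin M), wstar σ lam π (Ypath Y i j t) k
      = ((Klam σ lam (Ypath Y i j t)).det)⁻¹
        * ∑ l, (Klam σ lam (Ypath Y i j t)).adjugate k l * v0vec σ π (Ypath Y i j t) l := by
    intro t k
    rw [wstar, Matrix.inv_def, Ring.inverse_eq_inv', Matrix.smul_mulVec]
    simp [Matrix.mulVec, dotProduct]
  have hwdiff : ∀ k : Fin M,
      DifferentiableAt ℝ (fun t : ℝ => wstar σ lam π (Ypath Y i j t) k) 0 := by
    intro k
    have h1 : (fun t : ℝ => wstar σ lam π (Ypath Y i j t) k) = fun t =>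
        ((Klam σ lam (Ypath Y i j t)).det)⁻¹
        * ∑ l, (Klam σ lam (Ypath Y i j t)).adjugate k l * v0vec σ π (Ypath Y i j t) l :=
      funext fun t => hwrep t k
    rw [h1]
    exact (hdet.inv (hdet_ne 0)).mul
      (DifferentiableAt.fun_sum fun l _ => (hadj k l).mul (hvdiff l))
  have hw : ∀ k : Fin M,
      HasDerivAt (fun t : ℝ => wstar σ lam π (Ypath Y i j t) k) (w' k) 0 :=
    fun k => (hwdiff k).hasDerivAt
  have hId : ∀ (t : ℝ) (k : Fin M),
      ∑ l, Klam σ lam (Ypath Y i j t) k l * wstar σ lam π (Ypath Y i j t) l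
      = v0vec σ π (Ypath Y i j t) k := by
    intro t k
    have h1 := congrFun
      (Klam_mulVec_inv hσ hlam (Ypath Y i j t) (v0vec σ π (Ypath Y i j t))) k
    rw [← h1]
    simp [wstar, Matrix.mulVec, dotProduct]
  have hId0 : ∀ k : Fin M,
      ∑ l, Klam σ lam Y k l * wstar σ lam π Y l = v0vec σ π Y k := by
    intro k
    have := hId 0 k
    rwa [hY0] at this
  have Ek : ∀ k : Fin M, ∑ l, K' k l * wstar σ lam π Y l
      + ∑ l, Klam σ lam Y k l * w' l = v' k := by
    intro k
    have h1 : HasDerivAt (fun t : ℝ => ∑ l, Klam σ lam (Ypath Y i j t) k l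
          * wstar σ lam π (Ypath Y i j t) l)
        (∑ l, (K' k l * wstar σ lam π (Ypath Y i j 0) l
          + Klam σ lam (Ypath Y i j 0) k l * w' l)) 0 := by
      apply HasDerivAt.fun_sum
      intro l _
      exact (hAderiv k l).mul (hw l)
    rw [hY0] at h1
    have h2 : HasDerivAt (fun t : ℝ => ∑ l, Klam σ lam (Ypath Y i j t) k l
          * wstar σ lam π (Ypath Y i j t) l) (v' k) 0 := by
      have e : (fun t : ℝ => ∑ l, Klam σ lam (Ypath Y i j t) k l
          * wstar σ lam π (Ypath Y i j t) l)
          = fun t => v0vec σ π (Ypath Y i j t) k := funext fun t => hId t k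
      rw [e]; exact hvd k
    have h3 := h2.unique h1
    rw [h3]
    exact Finset.sum_add_distrib.symm
  have hAsymm : ∀ k l : Fin M, Klam σ lam Y k l = Klam σ lam Y l k := by
    intro k l
    have := congrFun (congrFun (Klam_transpose σ lam Y) l) k
    rw [← this]
    rfl
  have e5 : ∀ l : Fin M, ∑ k, Klam σ lam Y l k * w' k
      = v' l - ∑ m, K' l m * wstar σ lam π Y m := by
    intro l
    have := Ek l
    linarith
  have claim : ∑ k, v0vec σ π Y k * w' k
      = ∑ k, wstar σ lam π Y k * v' k
        - ∑ k, wstar σ lam π Y k * ∑ l, K' k l * wstar σ lam π Y l := by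
    calc ∑ k, v0vec σ π Y k * w' k
        = ∑ k, (∑ l, Klam σ lam Y k l * wstar σ lam π Y l) * w' k := by
          apply Finset.sum_congr rfl; intro k _
          rw [hId0 k]
      _ = ∑ l, ∑ k, Klam σ lam Y k l * wstar σ lam π Y l * w' k := by
          simp only [Finset.sum_mul]; exact Finset.sum_comm
      _ = ∑ l, wstar σ lam π Y l * ∑ k, Klam σ lam Y l k * w' k := by
          apply Finset.sum_congr rfl; intro l _
          rw [Finset.mul_sum]
          apply Finset.sum_congr rfl; intro k _
          rw [hAsymm k l]; ring
      _ = ∑ l, (wstar σ lam π Y l * v' l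
            - wstar σ lam π Y l * ∑ m, K' l m * wstar σ lam π Y m) := by
          apply Finset.sum_congr rfl; intro l _
          rw [e5 l]; ring
      _ = _ := by rw [Finset.sum_sub_distrib]
  have hFMfun : (fun t : ℝ => FM σ lam π (Ypath Y i j t))
      = fun t => (1/2) * (Cpi σ π - ∑ k, v0vec σ π (Ypath Y i j t) k
          * wstar σ lam π (Ypath Y i j t) k) := by
    funext t
    rw [FM_eq hσ hlam π (Ypath Y i j t)]
    rfl
  rw [hFMfun]
  have hg : HasDerivAt (fun t : ℝ => (1/2 : ℝ) * (Cpi σ π - ∑ k, v0vec σ π (Ypath Y i j t) k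
        * wstar σ lam π (Ypath Y i j t) k))
      ((1/2 : ℝ) * (0 - ∑ k, (v' k * wstar σ lam π (Ypath Y i j 0) k
        + v0vec σ π (Ypath Y i j 0) k * w' k))) 0 := by
    apply HasDerivAt.const_mul
    apply HasDerivAt.sub (hasDerivAt_const _ _)
    apply HasDerivAt.fun_sum
    intro k _
    exact (hvd k).mul (hw k)
  rw [hY0] at hg
  convert hg using 1
  simp only [dotProduct, Matrix.mulVec, Matrix.of_apply]
  rw [Finset.sum_add_distrib, claim]
  have comm : ∑ k, v' k * wstar σ lam π Y k = ∑ k, wstar σ lam π Y k * v' k :=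
    Finset.sum_congr rfl fun k _ => mul_comm _ _
  rw [comm]
  ring
end
end
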